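/- Let f : [0,∞) → ℂ be locally integrable, let W(t) := [[0, f(t)], [conj(f(t)), 0]] ∈ M₂(ℂ), and let G : [0,∞) → M₂(ℂ) be continuous with G(x) = 1 + ∫₀ˣ W(t)·G(t) dt for all x ≥ 0. Then for every x ≥ 0 the matrix G(x) is of SU(1,1) form: (G(x))₂₁ = conj((G(x))₁₂), (G(x))₂₂ = conj((G(x))₁₁), and |(G(x))₁₁|² − |(G(x))₁₂|² = 1; in particular det G(x) = 1 and |(G(x))₁₁| ≥ 1. -/

import Mathlib

open MeasureTheory Set

/-- The off-diagonal matrix potential built from a scalar function `f`. -/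
noncomputable def WmatOf (f : ℝ → ℂ) (t : ℝ) : Matrix (Fin 2) (Fin 2) ℂ :=
  !![0, f t; (starRingEnd ℂ) (f t), 0]

/-- `G` is a (continuous) solution on `[0,∞)` of `G(x) = 1 + ∫₀ˣ W(t)·G(t) dt`
where `W(t) = [[0, f(t)], [conj f(t), 0]]`. -/
def IsSolutionOf (f : ℝ → ℂ) (G : ℝ → Matrix (Fin 2) (Fin 2) ℂ) : Prop :=
  ContinuousOn G (Set.Ici 0) ∧
  ∀ x : ℝ, 0 ≤ x → ∀ i j : Fin 2,
    G x i j = (1 : Matrix (Fin 2) (Fin 2) ℂ) i j +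
      ∫ t in (0:ℝ)..x, (WmatOf f t * G t) i j


lemma volterra_swap {𝕜 : Type*} [RCLike 𝕜] (F H : ℝ → 𝕜) {x : ℝ} (hx : 0 ≤ x)
    (hF : IntegrableOn F (Ioc 0 x)) (hH : IntegrableOn H (Ioc 0 x)) :
    (∫ t in (0:ℝ)..x, F t) * (∫ t in (0:ℝ)..x, H t) =
      (∫ t in (0:ℝ)..x, F t * ∫ s in (0:ℝ)..t, H s) +
      ∫ t in (0:ℝ)..x, (∫ s in (0:ℝ)..t, F s) * H t := by
  have hFi : IntervalIntegrable F volume 0 x := by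
    rw [intervalIntegrable_iff_integrableOn_Ioc_of_le hx]; exact hF
  have hHi : IntervalIntegrable H volume 0 x := by
    rw [intervalIntegrable_iff_integrableOn_Ioc_of_le hx]; exact hH
  set μ := volume.restrict (Ioc (0:ℝ) x) with hμ
  have hK : Integrable (fun p : ℝ × ℝ => F p.1 * H p.2) (μ.prod μ) := hF.mul_prod hH
  have hS : MeasurableSet {p : ℝ × ℝ | p.2 ≤ p.1} := measurableSet_le measurable_snd measurable_fst
  have hK' : Integrable (fun p : ℝ × ℝ => if p.2 ≤ p.1 then F p.1 * H p.2 else 0) (μ.prod μ) := by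
    have := hK.indicator hS
    refine this.congr (Filter.Eventually.of_forall fun p => ?_)
    simp [Set.indicator_apply]
  have swap := integral_integral_swap (f := fun t s => if s ≤ t then F t * H s else (0:𝕜)) hK'
  have hL : (∫ t, ∫ s, (if s ≤ t then F t * H s else 0) ∂μ ∂μ)
      = ∫ t in (0:ℝ)..x, F t * ∫ s in (0:ℝ)..t, H s := by
    rw [intervalIntegral.integral_of_le hx, hμ]
    refine setIntegral_congr_fun measurableSet_Ioc fun t ht => ?_
    have h1 : (fun s => if s ≤ t then F t * H s else 0)
        = (Iic t).indicator (fun s => F t * H s) := by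
      funext s; simp [Set.indicator_apply]
    rw [h1, MeasureTheory.integral_indicator measurableSet_Iic,
      Measure.restrict_restrict measurableSet_Iic]
    have h2 : Iic t ∩ Ioc 0 x = Ioc 0 t := by
      ext s; simp only [mem_inter_iff, mem_Iic, mem_Ioc]
      constructor
      · rintro ⟨h1', h2', _⟩; exact ⟨h2', h1'⟩
      · rintro ⟨h1', h2'⟩; exact ⟨h2', h1', h2'.trans ht.2⟩
    rw [h2, MeasureTheory.integral_const_mul, intervalIntegral.integral_of_le ht.1.le]
  have hR : (∫ s, ∫ t, (if s ≤ t then F t * H s else 0) ∂μ ∂μ)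
      = (∫ t in (0:ℝ)..x, F t) * (∫ t in (0:ℝ)..x, H t)
        - ∫ t in (0:ℝ)..x, (∫ s in (0:ℝ)..t, F s) * H t := by
    have key : ∀ s ∈ Ioc (0:ℝ) x, (∫ t, (if s ≤ t then F t * H s else 0) ∂μ)
        = ((∫ t in (0:ℝ)..x, F t) - ∫ u in (0:ℝ)..s, F u) * H s := by
      intro s hs
      have h1 : (fun t => if s ≤ t then F t * H s else 0)
          = (Ici s).indicator (fun t => F t * H s) := by
        funext t; simp [Set.indicator_apply]
      rw [h1, MeasureTheory.integral_indicator measurableSet_Ici,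
        Measure.restrict_restrict measurableSet_Ici]
      have h2 : Ici s ∩ Ioc 0 x = Icc s x := by
        ext t; simp only [mem_inter_iff, mem_Ici, mem_Ioc, mem_Icc]
        constructor
        · rintro ⟨h1', h2', h3'⟩; exact ⟨h1', h3'⟩
        · rintro ⟨h1', h2'⟩; exact ⟨h1', hs.1.trans_le h1', h2'⟩
      rw [h2, MeasureTheory.integral_mul_const, integral_Icc_eq_integral_Ioc,
        ← intervalIntegral.integral_of_le hs.2]
      have m1 : IntervalIntegrable F volume 0 s :=
        hFi.mono_set (uIcc_subset_uIcc left_mem_uIcc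
          (by rw [uIcc_of_le hx]; exact ⟨hs.1.le, hs.2⟩))
      have m2 : IntervalIntegrable F volume s x :=
        hFi.mono_set (uIcc_subset_uIcc
          (by rw [uIcc_of_le hx]; exact ⟨hs.1.le, hs.2⟩) right_mem_uIcc)
      have h3 := intervalIntegral.integral_add_adjacent_intervals m1 m2
      rw [← h3]; ring
    rw [hμ, setIntegral_congr_fun measurableSet_Ioc key]
    have hc : ContinuousOn (fun s => ∫ u in (0:ℝ)..s, F u) (Icc 0 x) := by
      have := intervalIntegral.continuousOn_primitive_interval
        (f := F) (a := 0) (b := x) (μ := volume) ?_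
      · rwa [uIcc_of_le hx] at this
      · rw [uIcc_of_le hx, integrableOn_Icc_iff_integrableOn_Ioc]; exact hF
    have hint : IntegrableOn (fun s => (∫ u in (0:ℝ)..s, F u) * H s) (Ioc 0 x) := by
      have hHIcc : IntegrableOn H (Icc 0 x) := by
        rw [integrableOn_Icc_iff_integrableOn_Ioc]; exact hH
      exact (IntegrableOn.continuousOn_mul hc hHIcc isCompact_Icc).mono_set Ioc_subset_Icc_self
    have hsub : ∀ s ∈ Ioc (0:ℝ) x,
        ((∫ t in (0:ℝ)..x, F t) - ∫ u in (0:ℝ)..s, F u) * H s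
        = (∫ t in (0:ℝ)..x, F t) * H s - (∫ u in (0:ℝ)..s, F u) * H s := fun s _ => by ring
    rw [setIntegral_congr_fun measurableSet_Ioc hsub,
      integral_sub (hH.const_mul _) hint,
      MeasureTheory.integral_const_mul, ← intervalIntegral.integral_of_le hx,
      ← intervalIntegral.integral_of_le hx]
  have h := hL.symm.trans (swap.trans hR)
  rw [h]; ring

lemma moment_lemma (g : ℝ → ℝ) (hg : ∀ s, 0 ≤ s → IntegrableOn g (Ioc 0 s)) :
    ∀ n : ℕ, ∀ s : ℝ, 0 ≤ s →
      ∫ t in (0:ℝ)..s, g t * (∫ u in (0:ℝ)..t, g u) ^ n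
        = (∫ t in (0:ℝ)..s, g t) ^ (n + 1) / (n + 1) := by
  intro n
  induction n with
  | zero => intro s hs; simp
  | succ n ih =>
    intro s hs
    have hΦc : ContinuousOn (fun t => ∫ u in (0:ℝ)..t, g u) (Icc 0 s) := by
      have := intervalIntegral.continuousOn_primitive_interval
        (f := g) (a := 0) (b := s) (μ := volume) ?_
      · rwa [uIcc_of_le hs] at this
      · rw [uIcc_of_le hs, integrableOn_Icc_iff_integrableOn_Ioc]; exact hg s hs
    have hFint : IntegrableOn (fun t => g t * (∫ u in (0:ℝ)..t, g u) ^ n) (Ioc 0 s) := by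
      have : IntegrableOn g (Icc 0 s) := by
        rw [integrableOn_Icc_iff_integrableOn_Ioc]; exact hg s hs
      exact (this.mul_continuousOn (hΦc.pow n) isCompact_Icc).mono_set Ioc_subset_Icc_self
    have key := volterra_swap (fun t => g t * (∫ u in (0:ℝ)..t, g u) ^ n) g hs hFint (hg s hs)
    set Φ : ℝ → ℝ := fun t => ∫ u in (0:ℝ)..t, g u with hΦ
    -- rewrite inner integrals using ih
    have e1 : (∫ t in (0:ℝ)..s, (g t * Φ t ^ n) * Φ t) = ∫ t in (0:ℝ)..s, g t * Φ t ^ (n+1) := by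
      refine intervalIntegral.integral_congr fun t _ => ?_
      rw [pow_succ]; ring
    have e2 : (∫ t in (0:ℝ)..s, (∫ u in (0:ℝ)..t, g u * Φ u ^ n) * g t)
        = (1/(n+1)) * ∫ t in (0:ℝ)..s, g t * Φ t ^ (n+1) := by
      rw [← intervalIntegral.integral_const_mul]
      refine intervalIntegral.integral_congr fun t ht => ?_
      rw [uIcc_of_le hs] at ht
      rw [ih t ht.1, pow_succ]
      field_simp
    simp only [] at key
    rw [ih s hs] at key
    rw [e1, e2] at key
    set I := ∫ t in (0:ℝ)..s, g t * Φ t ^ (n+1) with hI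
    set C := (∫ t in (0:ℝ)..s, g t) with hC
    have key2 : C ^ (n+1) / (n+1) * C = I + 1/(n+1) * I := key
    have hne : ((n:ℝ) + 1) ≠ 0 := by positivity
    have h2 : C ^ (n+2) = I * ((n:ℝ) + 2) := by
      have : C ^ (n+1) * C = I * ((n:ℝ)+1) + I := by
        field_simp at key2; linarith
      rw [pow_succ]; rw [this]; ring
    have hne2 : ((n:ℝ) + 2) ≠ 0 := by positivity
    have final : I = C ^ (n + 2) / ((n:ℝ) + 2) := by rw [h2]; field_simp
    have hcast : ((n+1:ℕ):ℝ) + 1 = (n:ℝ) + 2 := by push_cast; ring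
    rw [hcast]
    exact final

lemma gronwall_zero (g ψ : ℝ → ℝ) {X : ℝ} (hX : 0 ≤ X)
    (hg : ∀ s, 0 ≤ s → IntegrableOn g (Ioc 0 s)) (hgpos : ∀ t, 0 ≤ g t)
    (hψc : ContinuousOn ψ (Icc 0 X)) (hψpos : ∀ t, 0 ≤ ψ t)
    (hineq : ∀ s ∈ Icc 0 X, ψ s ≤ ∫ t in (0:ℝ)..s, g t * ψ t) :
    ∀ s ∈ Icc 0 X, ψ s = 0 := by
  obtain ⟨M, hM⟩ := (isCompact_Icc (a := (0:ℝ)) (b := X)).exists_bound_of_continuousOn hψc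
  have hΦc : ContinuousOn (fun t => ∫ u in (0:ℝ)..t, g u) (Icc 0 X) := by
    have := intervalIntegral.continuousOn_primitive_interval
      (f := g) (a := 0) (b := X) (μ := volume) ?_
    · rwa [uIcc_of_le hX] at this
    · rw [uIcc_of_le hX, integrableOn_Icc_iff_integrableOn_Ioc]; exact hg X hX
  set Φ : ℝ → ℝ := fun t => ∫ u in (0:ℝ)..t, g u with hΦ
  have claim : ∀ n : ℕ, ∀ s ∈ Icc (0:ℝ) X, ψ s ≤ M * (Φ s ^ n / n.factorial) := by
    intro n
    induction n with
    | zero =>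
      intro s hs; simpa using (le_trans (le_abs_self _) (hM s hs))
    | succ n ih =>
      intro s hs
      have hs0 : (0:ℝ) ≤ s := hs.1
      have hsub : Icc (0:ℝ) s ⊆ Icc 0 X := Icc_subset_Icc le_rfl hs.2
      have hint1 : IntervalIntegrable (fun t => g t * ψ t) volume 0 s := by
        rw [intervalIntegrable_iff_integrableOn_Ioc_of_le hs0]
        have : IntegrableOn g (Icc 0 s) := by
          rw [integrableOn_Icc_iff_integrableOn_Ioc]; exact hg s hs0
        exact (this.mul_continuousOn (hψc.mono hsub) isCompact_Icc).mono_set Ioc_subset_Icc_self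
      have hint2 : IntervalIntegrable (fun t => g t * (M * (Φ t ^ n / n.factorial))) volume 0 s := by
        rw [intervalIntegrable_iff_integrableOn_Ioc_of_le hs0]
        have hgI : IntegrableOn g (Icc 0 s) := by
          rw [integrableOn_Icc_iff_integrableOn_Ioc]; exact hg s hs0
        have hcont : ContinuousOn (fun t => M * (Φ t ^ n / n.factorial)) (Icc 0 s) := by
          exact (((hΦc.mono hsub).pow n).div_const _).const_smul M
        exact (hgI.mul_continuousOn hcont isCompact_Icc).mono_set Ioc_subset_Icc_self
      have step1 : ψ s ≤ ∫ t in (0:ℝ)..s, g t * ψ t := hineq s hs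
      have step2 : (∫ t in (0:ℝ)..s, g t * ψ t)
          ≤ ∫ t in (0:ℝ)..s, g t * (M * (Φ t ^ n / n.factorial)) := by
        refine intervalIntegral.integral_mono_on hs0 hint1 hint2 fun t ht => ?_
        exact mul_le_mul_of_nonneg_left (ih t (hsub ht)) (hgpos t)
      have step3 : (∫ t in (0:ℝ)..s, g t * (M * (Φ t ^ n / n.factorial)))
          = M * (Φ s ^ (n+1) / (n+1).factorial) := by
        have : (∫ t in (0:ℝ)..s, g t * (M * (Φ t ^ n / n.factorial)))
            = (M / n.factorial) * ∫ t in (0:ℝ)..s, g t * Φ t ^ n := by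
          rw [← intervalIntegral.integral_const_mul]
          refine intervalIntegral.integral_congr fun t _ => ?_
          ring
        have fact : ∀ (A B k m : ℝ), m ≠ 0 → k ≠ 0 → A / m * (B / k) = A * (B / (k * m)) := by
          intros A B k m hm hk; field_simp
        rw [this, moment_lemma g hg n s hs0, Nat.factorial_succ]
        push_cast
        exact fact M _ _ _ (by positivity) (by positivity)
      calc ψ s ≤ _ := step1
        _ ≤ _ := step2
        _ = _ := step3
  intro s hs
  have htend : Filter.Tendsto (fun n : ℕ => M * (Φ s ^ n / n.factorial)) Filter.atTop (nhds 0) := by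
    have := (FloorSemiring.tendsto_pow_div_factorial_atTop (K := ℝ) (Φ s)).const_mul M
    simpa using this
  have hle : ψ s ≤ 0 := ge_of_tendsto' htend fun n => claim n s hs
  exact le_antisymm hle (hψpos s)

open ComplexConjugate in
theorem solution_is_SU11 (f : ℝ → ℂ)
    (hf : LocallyIntegrableOn f (Set.Ici 0))
    (G : ℝ → Matrix (Fin 2) (Fin 2) ℂ) (hG : IsSolutionOf f G) :
    ∀ x : ℝ, 0 ≤ x →
      G x 1 0 = (starRingEnd ℂ) (G x 0 1) ∧
      G x 1 1 = (starRingEnd ℂ) (G x 0 0) ∧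
      ‖G x 0 0‖ ^ 2 - ‖G x 0 1‖ ^ 2 = 1 ∧
      (G x).det = 1 ∧
      1 ≤ ‖G x 0 0‖ := by
  obtain ⟨hGc, hGeq⟩ := hG
  -- continuity of matrix entries
  have hent : ∀ i j : Fin 2, ContinuousOn (fun t => G t i j) (Ici 0) := by
    intro i j
    have h1 : Continuous (fun m : Matrix (Fin 2) (Fin 2) ℂ => m i j) :=
      (continuous_apply j).comp (continuous_apply i)
    exact h1.comp_continuousOn hGc
  have hconjcont : Continuous (starRingEnd ℂ) := Complex.continuous_conj
  have hentc : ∀ i j : Fin 2, ContinuousOn (fun t => conj (G t i j)) (Ici 0) := fun i j =>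
    hconjcont.comp_continuousOn (hent i j)
  -- integrability
  have hfI : ∀ x : ℝ, 0 ≤ x → IntegrableOn f (Ioc 0 x) := fun x hx =>
    (hf.integrableOn_compact_subset (fun t ht => ht.1) isCompact_Icc).mono_set
      Ioc_subset_Icc_self
  have hfcI : ∀ x : ℝ, 0 ≤ x → IntegrableOn (fun t => conj (f t)) (Ioc 0 x) := by
    intro x hx
    have h := (Complex.conjCLE.toContinuousLinearMap).integrable_comp (hfI x hx)
    simp at h; exact h
  have hmulgen : ∀ (g h : ℝ → ℂ), (∀ x, 0 ≤ x → IntegrableOn g (Ioc 0 x)) →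
      ContinuousOn h (Ici 0) → ∀ x : ℝ, 0 ≤ x → IntegrableOn (fun t => g t * h t) (Ioc 0 x) := by
    intro g h hg hh x hx
    have h1 : IntegrableOn g (Icc 0 x) := by
      rw [integrableOn_Icc_iff_integrableOn_Ioc]; exact hg x hx
    exact (h1.mul_continuousOn (hh.mono fun t ht => ht.1) isCompact_Icc).mono_set
      Ioc_subset_Icc_self
  have iv : ∀ (g : ℝ → ℂ) (x : ℝ), 0 ≤ x → IntegrableOn g (Ioc 0 x) →
      IntervalIntegrable g volume 0 x := fun g x hx h =>
    (intervalIntegrable_iff_integrableOn_Ioc_of_le hx).2 h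
  have ivr : ∀ (g : ℝ → ℝ) (x : ℝ), 0 ≤ x → IntegrableOn g (Ioc 0 x) →
      IntervalIntegrable g volume 0 x := fun g x hx h =>
    (intervalIntegrable_iff_integrableOn_Ioc_of_le hx).2 h
  -- matrix entry computations
  have hW0 : ∀ (t : ℝ) (j : Fin 2), (WmatOf f t * G t) 0 j = f t * G t 1 j := fun t j => by
    simp [WmatOf, Matrix.mul_apply, Fin.sum_univ_two]
  have hW1 : ∀ (t : ℝ) (j : Fin 2), (WmatOf f t * G t) 1 j = conj (f t) * G t 0 j := fun t j => by
    simp [WmatOf, Matrix.mul_apply, Fin.sum_univ_two]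
  have hE00 : ∀ x : ℝ, 0 ≤ x → G x 0 0 = 1 + ∫ t in (0:ℝ)..x, f t * G t 1 0 := by
    intro x hx
    have h := hGeq x hx 0 0
    simpa only [hW0, Matrix.one_apply_eq] using h
  have hE01 : ∀ x : ℝ, 0 ≤ x → G x 0 1 = ∫ t in (0:ℝ)..x, f t * G t 1 1 := by
    intro x hx
    have h := hGeq x hx 0 1
    simpa only [hW0, Matrix.one_apply_ne (by decide : (0 : Fin 2) ≠ 1), zero_add] using h
  have hE10 : ∀ x : ℝ, 0 ≤ x → G x 1 0 = ∫ t in (0:ℝ)..x, conj (f t) * G t 0 0 := by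
    intro x hx
    have h := hGeq x hx 1 0
    simpa only [hW1, Matrix.one_apply_ne (by decide : (1 : Fin 2) ≠ 0), zero_add] using h
  have hE11 : ∀ x : ℝ, 0 ≤ x → G x 1 1 = 1 + ∫ t in (0:ℝ)..x, conj (f t) * G t 0 1 := by
    intro x hx
    have h := hGeq x hx 1 1
    simpa only [hW1, Matrix.one_apply_eq] using h
  -- Step 1: symmetry via Gronwall
  set p : ℝ → ℂ := fun t => G t 0 0 - conj (G t 1 1) with hpdef
  set q : ℝ → ℂ := fun t => G t 1 0 - conj (G t 0 1) with hqdef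
  have hpcont : ContinuousOn p (Ici 0) := (hent 0 0).sub (hentc 1 1)
  have hqcont : ContinuousOn q (Ici 0) := (hent 1 0).sub (hentc 0 1)
  have hp : ∀ x : ℝ, 0 ≤ x → p x = ∫ t in (0:ℝ)..x, f t * q t := by
    intro x hx
    have e2 : conj (G x 1 1) = 1 + ∫ t in (0:ℝ)..x, f t * conj (G t 0 1) := by
      rw [hE11 x hx, map_add, map_one]
      congr 1
      rw [intervalIntegral.integral_of_le hx, intervalIntegral.integral_of_le hx,
        ← integral_conj]
      exact setIntegral_congr_fun measurableSet_Ioc fun t _ => by simp [mul_comm]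
    have e1 := hE00 x hx
    show G x 0 0 - conj (G x 1 1) = _
    rw [e1, e2, add_sub_add_left_eq_sub]
    rw [← intervalIntegral.integral_sub (iv _ x hx (hmulgen f _ hfI (hent 1 0) x hx))
      (iv _ x hx (hmulgen f _ hfI (hentc 0 1) x hx))]
    exact intervalIntegral.integral_congr fun t _ => (mul_sub (f t) _ _).symm
  have hq : ∀ x : ℝ, 0 ≤ x → q x = ∫ t in (0:ℝ)..x, conj (f t) * p t := by
    intro x hx
    have e2 : conj (G x 0 1) = ∫ t in (0:ℝ)..x, conj (f t) * conj (G t 1 1) := by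
      rw [hE01 x hx]
      rw [intervalIntegral.integral_of_le hx, intervalIntegral.integral_of_le hx,
        ← integral_conj]
      exact setIntegral_congr_fun measurableSet_Ioc fun t _ => by simp
    have e1 := hE10 x hx
    show G x 1 0 - conj (G x 0 1) = _
    rw [e1, e2]
    rw [← intervalIntegral.integral_sub (iv _ x hx (hmulgen _ _ hfcI (hent 0 0) x hx))
      (iv _ x hx (hmulgen _ _ hfcI (hentc 1 1) x hx))]
    exact intervalIntegral.integral_congr fun t _ => (mul_sub (conj (f t)) _ _).symm
  have hzero : ∀ x : ℝ, 0 ≤ x → p x = 0 ∧ q x = 0 := by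
    intro X hX
    set g : ℝ → ℝ := fun t => ‖f t‖ with hgdef
    set ψ : ℝ → ℝ := fun t => ‖p t‖ + ‖q t‖ with hψdef
    have hgI : ∀ s : ℝ, 0 ≤ s → IntegrableOn g (Ioc 0 s) := by
      intro s hs
      exact MeasureTheory.IntegrableOn.congr_fun (hfI s hs).norm
        (fun t _ => by simp [hgdef]) measurableSet_Ioc
    have hgpos : ∀ t, 0 ≤ g t := fun t => norm_nonneg _
    have hψpos : ∀ t, 0 ≤ ψ t := fun t =>
      add_nonneg (norm_nonneg _) (norm_nonneg _)
    have hψc : ContinuousOn ψ (Icc 0 X) :=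
      ((continuous_norm.comp_continuousOn hpcont).add
        (continuous_norm.comp_continuousOn hqcont)).mono fun t ht => ht.1
    have hineq : ∀ s ∈ Icc (0:ℝ) X, ψ s ≤ ∫ t in (0:ℝ)..s, g t * ψ t := by
      intro s hs
      have hs0 : (0:ℝ) ≤ s := hs.1
      have igq : IntervalIntegrable (fun t => g t * ‖q t‖) volume 0 s := by
        refine ivr _ s hs0 ?_
        have h1 : IntegrableOn g (Icc 0 s) := by
          rw [integrableOn_Icc_iff_integrableOn_Ioc]; exact hgI s hs0
        exact (h1.mul_continuousOn
          ((continuous_norm.comp_continuousOn hqcont).mono fun t ht => ht.1)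
          isCompact_Icc).mono_set Ioc_subset_Icc_self
      have igp : IntervalIntegrable (fun t => g t * ‖p t‖) volume 0 s := by
        refine ivr _ s hs0 ?_
        have h1 : IntegrableOn g (Icc 0 s) := by
          rw [integrableOn_Icc_iff_integrableOn_Ioc]; exact hgI s hs0
        exact (h1.mul_continuousOn
          ((continuous_norm.comp_continuousOn hpcont).mono fun t ht => ht.1)
          isCompact_Icc).mono_set Ioc_subset_Icc_self
      have b1 : ‖p s‖ ≤ ∫ t in (0:ℝ)..s, g t * ‖q t‖ := by
        rw [hp s hs0]
        calc ‖∫ t in (0:ℝ)..s, f t * q t‖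
            = ‖∫ t in (0:ℝ)..s, f t * q t‖ := rfl
          _ ≤ ∫ t in (0:ℝ)..s, ‖f t * q t‖ :=
              intervalIntegral.norm_integral_le_integral_norm hs0
          _ = ∫ t in (0:ℝ)..s, g t * ‖q t‖ :=
              intervalIntegral.integral_congr fun t _ => by
                simp [hgdef, map_mul]
      have b2 : ‖q s‖ ≤ ∫ t in (0:ℝ)..s, g t * ‖p t‖ := by
        rw [hq s hs0]
        calc ‖∫ t in (0:ℝ)..s, conj (f t) * p t‖
            = ‖∫ t in (0:ℝ)..s, conj (f t) * p t‖ := rfl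
          _ ≤ ∫ t in (0:ℝ)..s, ‖conj (f t) * p t‖ :=
              intervalIntegral.norm_integral_le_integral_norm hs0
          _ = ∫ t in (0:ℝ)..s, g t * ‖p t‖ :=
              intervalIntegral.integral_congr fun t _ => by
                simp [hgdef, map_mul]
      calc ψ s ≤ (∫ t in (0:ℝ)..s, g t * ‖q t‖)
            + ∫ t in (0:ℝ)..s, g t * ‖p t‖ := add_le_add b1 b2
        _ = ∫ t in (0:ℝ)..s, g t * ψ t := by
            rw [← intervalIntegral.integral_add igq igp]
            exact intervalIntegral.integral_congr fun t _ => by simp [hψdef]; ring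
    have hz : ‖p X‖ + ‖q X‖ = 0 :=
      gronwall_zero g ψ hX hgI hgpos hψc hψpos hineq X ⟨hX, le_rfl⟩
    have n1 := norm_nonneg (p X)
    have n2 := norm_nonneg (q X)
    have h1 : ‖p X‖ = 0 := by linarith
    have h2 : ‖q X‖ = 0 := by linarith
    exact ⟨norm_eq_zero.1 h1, norm_eq_zero.1 h2⟩
  have hsym1 : ∀ t : ℝ, 0 ≤ t → G t 1 0 = conj (G t 0 1) := fun t ht =>
    sub_eq_zero.1 ((hzero t ht).2)
  have hsym2 : ∀ t : ℝ, 0 ≤ t → G t 1 1 = conj (G t 0 0) := by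
    intro t ht
    have h := sub_eq_zero.1 ((hzero t ht).1)
    rw [h]
    simp
  -- Step 2: determinant via the Fubini swap
  have hdet : ∀ x : ℝ, 0 ≤ x → G x 0 0 * G x 1 1 - G x 0 1 * G x 1 0 = 1 := by
    intro x hx
    set F : ℝ → ℂ := fun t => f t * G t 1 0 with hF
    set K : ℝ → ℂ := fun t => conj (f t) * G t 0 1 with hK
    set H : ℝ → ℂ := fun t => f t * G t 1 1 with hH
    set L : ℝ → ℂ := fun t => conj (f t) * G t 0 0 with hL
    have iF := hmulgen f _ hfI (hent 1 0)
    have iK := hmulgen _ _ hfcI (hent 0 1)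
    have iH := hmulgen f _ hfI (hent 1 1)
    have iL := hmulgen _ _ hfcI (hent 0 0)
    have sw1 := volterra_swap F K hx (iF x hx) (iK x hx)
    have sw2 := volterra_swap H L hx (iH x hx) (iL x hx)
    have sw1' : (∫ t in (0:ℝ)..x, F t) * (∫ t in (0:ℝ)..x, K t)
        = (∫ t in (0:ℝ)..x, F t * (G t 1 1 - 1)) + ∫ t in (0:ℝ)..x, (G t 0 0 - 1) * K t := by
      rw [sw1]
      congr 1
      · refine intervalIntegral.integral_congr fun t ht => ?_
        rw [uIcc_of_le hx] at ht
        rw [hE11 t ht.1]; ring_nf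
      · refine intervalIntegral.integral_congr fun t ht => ?_
        rw [uIcc_of_le hx] at ht
        rw [hE00 t ht.1]; ring_nf
    have sw2' : (∫ t in (0:ℝ)..x, H t) * (∫ t in (0:ℝ)..x, L t)
        = (∫ t in (0:ℝ)..x, H t * G t 1 0) + ∫ t in (0:ℝ)..x, G t 0 1 * L t := by
      rw [sw2]
      congr 1
      · refine intervalIntegral.integral_congr fun t ht => ?_
        rw [uIcc_of_le hx] at ht
        rw [← hE10 t ht.1]
      · refine intervalIntegral.integral_congr fun t ht => ?_
        rw [uIcc_of_le hx] at ht
        rw [← hE01 t ht.1]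
    have i1 := hmulgen f (fun t => G t 1 0 * (G t 1 1 - 1)) hfI ((hent 1 0).mul ((hent 1 1).sub continuousOn_const)) x hx
    have i1' : IntegrableOn (fun t => F t * (G t 1 1 - 1)) (Ioc 0 x) := by
      refine MeasureTheory.IntegrableOn.congr_fun i1 (fun t _ => ?_) measurableSet_Ioc
      simp only [hF]; ring
    have i2 := hmulgen (fun t => conj (f t)) (fun t => G t 0 1 * (G t 0 0 - 1)) hfcI ((hent 0 1).mul ((hent 0 0).sub continuousOn_const)) x hx
    have i2' : IntegrableOn (fun t => (G t 0 0 - 1) * K t) (Ioc 0 x) := by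
      refine MeasureTheory.IntegrableOn.congr_fun i2 (fun t _ => ?_) measurableSet_Ioc
      simp only [hK]; ring
    have i3 := hmulgen f _ hfI ((hent 1 1).mul (hent 1 0)) x hx
    have i3' : IntegrableOn (fun t => H t * G t 1 0) (Ioc 0 x) := by
      refine MeasureTheory.IntegrableOn.congr_fun i3 (fun t _ => ?_) measurableSet_Ioc
      simp only [hH, Pi.mul_apply]; ring
    have i4 := hmulgen _ _ hfcI ((hent 0 0).mul (hent 0 1)) x hx
    have i4' : IntegrableOn (fun t => G t 0 1 * L t) (Ioc 0 x) := by
      refine MeasureTheory.IntegrableOn.congr_fun i4 (fun t _ => ?_) measurableSet_Ioc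
      simp only [hL, Pi.mul_apply]; ring
    have key : (∫ t in (0:ℝ)..x, F t) + (∫ t in (0:ℝ)..x, K t)
        + ((∫ t in (0:ℝ)..x, F t) * (∫ t in (0:ℝ)..x, K t))
        - (∫ t in (0:ℝ)..x, H t) * (∫ t in (0:ℝ)..x, L t) = 0 := by
      rw [sw1', sw2']
      rw [← intervalIntegral.integral_add (iv _ x hx (iF x hx)) (iv _ x hx (iK x hx)),
        ← intervalIntegral.integral_add (iv _ x hx i1') (iv _ x hx i2'),
        ← intervalIntegral.integral_add ((iv _ x hx (iF x hx)).add (iv _ x hx (iK x hx)))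
          ((iv _ x hx i1').add (iv _ x hx i2')),
        ← intervalIntegral.integral_add (iv _ x hx i3') (iv _ x hx i4'),
        ← intervalIntegral.integral_sub
          (((iv _ x hx (iF x hx)).add (iv _ x hx (iK x hx))).add
            ((iv _ x hx i1').add (iv _ x hx i2')))
          ((iv _ x hx i3').add (iv _ x hx i4'))]
      rw [show (0:ℂ) = ∫ t in (0:ℝ)..x, (0:ℂ) by simp]
      refine intervalIntegral.integral_congr fun t _ => ?_
      simp only [hF, hK, hH, hL]
      ring
    rw [hE00 x hx, hE11 x hx, hE01 x hx, hE10 x hx]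
    linear_combination key
  -- conclude
  intro x hx
  have h := hdet x hx
  rw [hsym1 x hx, hsym2 x hx] at h
  rw [mul_comm (G x 0 0) (conj (G x 0 0)), mul_comm (G x 0 1) (conj (G x 0 1))] at h
  rw [Complex.conj_mul', Complex.conj_mul'] at h
  have h2 : ((‖G x 0 0‖ ^ 2 - ‖G x 0 1‖ ^ 2 : ℝ) : ℂ) = ((1:ℝ) : ℂ) := by
    push_cast
    simpa using h
  have h3 : ‖G x 0 0‖ ^ 2 - ‖G x 0 1‖ ^ 2 = 1 := by exact_mod_cast h2
  refine ⟨hsym1 x hx, hsym2 x hx, h3, ?_, ?_⟩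
  · rw [Matrix.det_fin_two]
    exact hdet x hx
  · nlinarith [norm_nonneg (G x 0 0), sq_nonneg (‖G x 0 1‖),
      sq_nonneg (‖G x 0 0‖ - 1), sq_nonneg (‖G x 0 0‖ + 1)]
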